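/- If T ∈ B(H) has dense range and f is a cyclic vector for T (i.e. the closed linear span of {T^n f : n ≥ 0} is H), then Tf is also a cyclic vector for T. Moreover, if T is cyclic with dense range and N ∈ B(ℂ^n) is a cyclic nilpotent operator (a single nilpotent Jordan block), then T ⊕ N is cyclic on H ⊕ ℂ^n, with cyclic vector f ⊕ e for any cyclic vectors f of T and e of N. -/

import Mathlib

open Filter Topology ContinuousLinearMap

lemma cyclic_shift' {H : Type*} [NormedAddCommGroup H] [InnerProductSpace ℂ H]
    (T : H →L[ℂ] H) (hT : DenseRange (⇑T)) (g : H)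
    (hg : Dense ((Submodule.span ℂ (Set.range fun k : ℕ => (T ^ k) g)) : Set H)) :
    Dense ((Submodule.span ℂ (Set.range fun k : ℕ => (T ^ k) (T g))) : Set H) := by
  have key : ∀ k : ℕ, T ((T ^ k) g) = (T ^ k) (T g) := by
    intro k
    rw [← ContinuousLinearMap.mul_apply, ← ContinuousLinearMap.mul_apply,
      ← pow_succ, ← pow_succ']
  have himgset : ⇑T '' Set.range (fun k : ℕ => (T ^ k) g)
      = Set.range (fun k : ℕ => (T ^ k) (T g)) := by
    rw [← Set.range_comp]
    exact congrArg Set.range (funext fun k => key k)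
  have himg : ⇑T '' ((Submodule.span ℂ (Set.range fun k : ℕ => (T ^ k) g)) : Set H)
      = ((Submodule.span ℂ (Set.range fun k : ℕ => (T ^ k) (T g))) : Set H) := by
    show ⇑(T : H →ₗ[ℂ] H) '' _ = _
    rw [← Submodule.map_coe, Submodule.map_span]
    exact congrArg (fun s => ((Submodule.span ℂ s : Submodule ℂ H) : Set H)) himgset
  have := hT.dense_image T.continuous hg
  rwa [himg] at this

theorem stmt19 {H : Type*} [NormedAddCommGroup H] [InnerProductSpace ℂ H] [CompleteSpace H]
    (T : H →L[ℂ] H) (hT : DenseRange (⇑T)) (f : H)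
    (hf : (Submodule.span ℂ (Set.range fun k : ℕ => (T ^ k) f)).topologicalClosure = ⊤)
    {n : ℕ} (N : EuclideanSpace ℂ (Fin n) →L[ℂ] EuclideanSpace ℂ (Fin n))
    (hNnil : N ^ n = 0) (e : EuclideanSpace ℂ (Fin n))
    (he : (Submodule.span ℂ (Set.range fun k : ℕ => (N ^ k) e)).topologicalClosure = ⊤) :
    ((Submodule.span ℂ (Set.range fun k : ℕ => (T ^ k) (T f))).topologicalClosure = ⊤) ∧
    ((Submodule.span ℂ
      (Set.range fun k : ℕ => ((T.prodMap N) ^ k) (f, e))).topologicalClosure = ⊤) := by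
  rw [← Submodule.dense_iff_topologicalClosure_eq_top] at hf he
  -- dense span of iterates of T^m f, for all m
  have hiter : ∀ m : ℕ,
      Dense ((Submodule.span ℂ (Set.range fun k : ℕ => (T ^ k) ((T ^ m) f))) : Set H) := by
    intro m
    induction m with
    | zero => simpa using hf
    | succ m ih =>
      have := cyclic_shift' T hT ((T ^ m) f) ih
      have harg : (T ^ (m + 1)) f = T ((T ^ m) f) := by
        rw [← ContinuousLinearMap.mul_apply, ← pow_succ']
      rw [harg]
      exact this
  constructor
  · rw [← Submodule.dense_iff_topologicalClosure_eq_top]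
    exact cyclic_shift' T hT f hf
  -- part 2
  have hspanN : Submodule.span ℂ (Set.range fun k : ℕ => (N ^ k) e) = ⊤ := by
    have hclosed := Submodule.closed_of_finiteDimensional
      (Submodule.span ℂ (Set.range fun k : ℕ => (N ^ k) e))
    rw [Submodule.eq_top_iff']
    intro v
    have hv := he v
    rwa [hclosed.closure_eq] at hv
  set M := (Submodule.span ℂ
      (Set.range fun k : ℕ => ((T.prodMap N) ^ k) (f, e))).topologicalClosure with hM
  have hMclosed : IsClosed (M : Set (H × EuclideanSpace ℂ (Fin n))) :=
    Submodule.isClosed_topologicalClosure _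
  have hpow : ∀ k : ℕ, ((T.prodMap N) ^ k) (f, e) = ((T ^ k) f, (N ^ k) e) := by
    intro k
    induction k with
    | zero => simp
    | succ k ih =>
      rw [pow_succ', ContinuousLinearMap.mul_apply, ih, pow_succ', pow_succ',
        ContinuousLinearMap.mul_apply, ContinuousLinearMap.mul_apply]
      rfl
  have hmem : ∀ k : ℕ, ((T ^ k) f, (N ^ k) e) ∈ M := by
    intro k
    have h1 : ((T.prodMap N) ^ k) (f, e) ∈ M :=
      Submodule.le_topologicalClosure _ (Submodule.subset_span ⟨k, rfl⟩)
    rwa [hpow k] at h1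
  -- (x, 0) ∈ M for all x
  have hx0 : ∀ x : H, (x, (0 : EuclideanSpace ℂ (Fin n))) ∈ M := by
    intro x
    set J : H →L[ℂ] H × EuclideanSpace ℂ (Fin n) :=
      ContinuousLinearMap.inl ℂ H (EuclideanSpace ℂ (Fin n)) with hJ
    have hgen : ∀ s ∈ Set.range (fun k : ℕ => (T ^ k) ((T ^ n) f)),
        J s ∈ (M : Set (H × EuclideanSpace ℂ (Fin n))) := by
      rintro _ ⟨k, rfl⟩
      have harg : (T ^ k) ((T ^ n) f) = (T ^ (k + n)) f := by
        rw [pow_add, ContinuousLinearMap.mul_apply]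
      have hNzero : (N ^ (k + n)) e = 0 := by
        rw [add_comm, pow_add, hNnil]
        simp
      have := hmem (k + n)
      rw [hNzero] at this
      show J ((T ^ k) ((T ^ n) f)) ∈ (M : Set (H × EuclideanSpace ℂ (Fin n)))
      rw [harg]
      simpa [hJ] using this
    have hle : Submodule.span ℂ (Set.range fun k : ℕ => (T ^ k) ((T ^ n) f))
        ≤ M.comap (J : H →ₗ[ℂ] H × EuclideanSpace ℂ (Fin n)) :=
      Submodule.span_le.2 hgen
    have hxcl : x ∈ closure
        ((Submodule.span ℂ (Set.range fun k : ℕ => (T ^ k) ((T ^ n) f))) : Set H) :=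
      (hiter n) x
    have : J x ∈ closure (M : Set (H × EuclideanSpace ℂ (Fin n))) :=
      map_mem_closure J.continuous hxcl (fun y hy => hle hy)
    rw [hMclosed.closure_eq] at this
    simpa [hJ] using this
  -- (0, v) ∈ M for all v
  have hv0 : ∀ v : EuclideanSpace ℂ (Fin n), ((0 : H), v) ∈ M := by
    have hgen : ∀ s ∈ Set.range (fun k : ℕ => (N ^ k) e),
        ((0 : H), s) ∈ M := by
      rintro _ ⟨k, rfl⟩
      have h1 := hmem k
      have h2 := hx0 ((T ^ k) f)
      have := M.sub_mem h1 h2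
      simpa using this
    have hle2 : Submodule.span ℂ (Set.range fun k : ℕ => (N ^ k) e)
        ≤ M.comap ((ContinuousLinearMap.inr ℂ H (EuclideanSpace ℂ (Fin n)))
            : EuclideanSpace ℂ (Fin n) →ₗ[ℂ] H × EuclideanSpace ℂ (Fin n)) := by
      refine Submodule.span_le.2 ?_
      rintro _ ⟨k, rfl⟩
      simpa using hgen _ ⟨k, rfl⟩
    intro v
    have hv : v ∈ Submodule.span ℂ (Set.range fun k : ℕ => (N ^ k) e) := by
      rw [hspanN]; trivial
    simpa using hle2 hv
  rw [Submodule.eq_top_iff']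
  rintro ⟨x, v⟩
  have := M.add_mem (hx0 x) (hv0 v)
  simpa using this
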